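/- Stability estimate for the dG(0) scheme (Theorem 4.1, case l = 0): There exists a constant C depending only on γ and ρ such that for every partition, every u_0, v_0 ∈ H, and all Bochner-integrable data f_1, f_2, the dG(0) approximation satisfies ‖A^{1/2} U_{1,N}‖ + ‖U_{2,N}‖ ≤ C ( ‖A^{1/2} u_0‖ + ‖v_0‖ + ∫_0^T ( ‖A^{1/2} f_1(t)‖ + ‖f_2(t)‖ ) dt ). -/

import Mathlib

open MeasureTheory Finset
open scoped RealInnerProductSpace

/-- The time step `k_n = t_n − t_{n-1}`. -/
noncomputable def kstep (tp : ℕ → ℝ) (n : ℕ) : ℝ := tp n - tp (n - 1)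

/-- The quadrature weights
`ω_{n,j} = ∫_{I_n} ∫_{t_{j-1}}^{min(t_j, t)} β(t − s) ds dt` for `1 ≤ j ≤ n ≤ N`. -/
noncomputable def qweight (β : ℝ → ℝ) (tp : ℕ → ℝ) (n j : ℕ) : ℝ :=
  ∫ t in (tp (n - 1))..(tp n), ∫ s in (tp (j - 1))..(min (tp j) t), β (t - s)

/-- The interval averages of the data, `f̄_n = (1/k_n) ∫_{I_n} f(t) dt`. -/
noncomputable def iavg {H : Type*} [NormedAddCommGroup H] [NormedSpace ℝ H]
    (tp : ℕ → ℝ) (f : ℝ → H) (n : ℕ) : H :=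
  (kstep tp n)⁻¹ • ∫ t in (tp (n - 1))..(tp n), f t

set_option maxHeartbeats 2000000 in
theorem discrete_stab {H : Type*} [NormedAddCommGroup H] [InnerProductSpace ℝ H]
    (ρ γ : ℝ) (hρ : 0 < ρ) (hγ0 : 0 < γ) (hγ1 : γ < 1)
    (A sqrtA : H →L[ℝ] H)
    (hsa : ∀ x y : H, ⟪sqrtA x, y⟫ = ⟪x, sqrtA y⟫)
    (hsq : ∀ x : H, sqrtA (sqrtA x) = A x)
    (N : ℕ) (hN : 1 ≤ N)
    (k : ℕ → ℝ) (hk : ∀ n, 1 ≤ n → n ≤ N → 0 < k n)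
    (θ : ℕ → ℕ → ℝ) (G : ℕ → ℝ) (hG0 : G 0 = 0)
    (hθ0 : ∀ n j, 1 ≤ j → j ≤ n → n ≤ N → 0 ≤ θ n j)
    (hGsum : ∀ n, 1 ≤ n → n ≤ N → (∑ j ∈ Icc 1 n, θ n j) = G n)
    (hGγ : ∀ n, n ≤ N → G n ≤ γ)
    (hGmono : ∀ n, 1 ≤ n → n ≤ N → G (n-1) ≤ G n)
    (hθmono : ∀ n j, 1 ≤ j → j < n → n + 1 ≤ N → θ (n+1) j ≤ θ n j)
    (U1 U2 F1 F2 : ℕ → H)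
    (eq1 : ∀ n, 1 ≤ n → n ≤ N → U1 n - U1 (n-1) = k n • U2 n + F1 n)
    (eq2 : ∀ n, 1 ≤ n → n ≤ N →
      ρ • (U2 n - U2 (n-1)) + (k n - k n * θ n n) • A (U1 n)
          - ∑ j ∈ Finset.Ico 1 n, (k n * θ n j) • A (U1 j) = F2 n) :
    ‖sqrtA (U1 N)‖ + ‖U2 N‖ ≤
      (8 / min ρ (1-γ) + 2 * Real.sqrt (2 * max ρ 1 / min ρ (1-γ))) *
        (‖sqrtA (U1 0)‖ + ‖U2 0‖ + ∑ n ∈ Icc 1 N, (‖sqrtA (F1 n)‖ + ‖F2 n‖)) := by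
  classical
  have hc1p : (0:ℝ) < min ρ (1-γ) := lt_min hρ (by linarith)
  have hc2p : (0:ℝ) < max ρ 1 := lt_of_lt_of_le one_pos (le_max_right _ _)
  -- abbreviations (functions, not `set`, to keep ring-atoms consistent we use plain defs)
  have hne : (Finset.Icc 0 N).Nonempty := ⟨0, by simp⟩
  set P : ℝ := (Finset.Icc 0 N).sup' hne (fun m => max ‖sqrtA (U1 m)‖ ‖U2 m‖) with hP
  have hPa : ∀ m, m ≤ N → ‖sqrtA (U1 m)‖ ≤ P := by
    intro m hm
    have h := Finset.le_sup' (fun m => max ‖sqrtA (U1 m)‖ ‖U2 m‖)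
      (Finset.mem_Icc.mpr ⟨Nat.zero_le m, hm⟩)
    exact le_trans (le_max_left _ _) h
  have hPb : ∀ m, m ≤ N → ‖U2 m‖ ≤ P := by
    intro m hm
    have h := Finset.le_sup' (fun m => max ‖sqrtA (U1 m)‖ ‖U2 m‖)
      (Finset.mem_Icc.mpr ⟨Nat.zero_le m, hm⟩)
    exact le_trans (le_max_right _ _) h
  have hP0 : 0 ≤ P := le_trans (norm_nonneg _) (hPa 0 (Nat.zero_le N))
  clear_value P
  have hAs : ∀ x y : H, ⟪A x, y⟫ = ⟪sqrtA x, sqrtA y⟫ := by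
    intro x y; rw [← hsq x, hsa]
  have polar : ∀ x y : H, 2*⟪x, y⟫ = ‖x‖^2 + ‖y‖^2 - ‖x - y‖^2 := by
    intro x y; have h := norm_sub_sq_real x y; linarith
  -- the history functional
  set Hh : ℕ → ℝ := fun m => ∑ j ∈ Finset.Ico 1 m, θ m j * ‖sqrtA (U1 j) - sqrtA (U1 (m-1))‖^2
    with hHh
  -- per-step estimate
  have step : ∀ n, 1 ≤ n → n ≤ N →
      ρ * ‖U2 n‖^2 + (1 - G n) * ‖sqrtA (U1 n)‖^2 + (if n < N then Hh (n+1) else 0)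
        ≤ ρ * ‖U2 (n-1)‖^2 + (1 - G n) * ‖sqrtA (U1 (n-1))‖^2 + Hh n
          + 4*P*(‖sqrtA (F1 n)‖ + ‖F2 n‖) := by
    intro n h1 h2
    have hkn := hk n h1 h2
    have hGn := hGγ n h2
    have hθnn0 : 0 ≤ θ n n := hθ0 n n h1 le_rfl h2
    have hθnnG : θ n n ≤ G n := by
      rw [← hGsum n h1 h2]
      exact Finset.single_le_sum (fun j hj => hθ0 n j (Finset.mem_Icc.mp hj).1
        (Finset.mem_Icc.mp hj).2 h2) (Finset.mem_Icc.mpr ⟨h1, le_rfl⟩)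
    have hGsplit : (∑ j ∈ Finset.Ico 1 n, θ n j) = G n - θ n n := by
      have h := hGsum n h1 h2
      have : Finset.Icc 1 n = Finset.Ico 1 (n+1) := by rfl
      rw [this, Finset.sum_Ico_succ_top h1] at h
      linarith
    -- pairing of eq2 with U2 n
    have e1 : ρ * ⟪U2 n - U2 (n-1), U2 n⟫
        + (k n - k n * θ n n) * ⟪sqrtA (U1 n), sqrtA (U2 n)⟫
        - ∑ j ∈ Finset.Ico 1 n, k n * θ n j * ⟪sqrtA (U1 j), sqrtA (U2 n)⟫
        = ⟪F2 n, U2 n⟫ := by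
      have h := congrArg (fun z : H => inner ℝ z (U2 n)) (eq2 n h1 h2)
      simpa [inner_sub_left, inner_add_left, real_inner_smul_left, sum_inner, hAs] using h
    -- eq1 paired with A x
    have key : ∀ x : H, k n * ⟪sqrtA x, sqrtA (U2 n)⟫
        = ⟪sqrtA x, sqrtA (U1 n)⟫ - ⟪sqrtA x, sqrtA (U1 (n-1))⟫
          - ⟪sqrtA x, sqrtA (F1 n)⟫ := by
      intro x
      have h := congrArg (fun z : H => inner ℝ (A x) z) (eq1 n h1 h2)
      simp only [hAs, map_sub, map_add, _root_.map_smul, inner_sub_right, inner_add_right,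
        real_inner_smul_right] at h
      linarith
    -- expanded identity
    have e4 : ρ * (‖U2 n‖^2 - ‖U2 (n-1)‖^2 + ‖U2 n - U2 (n-1)‖^2)
        + (1 - θ n n) * (‖sqrtA (U1 n)‖^2 - ‖sqrtA (U1 (n-1))‖^2
            + ‖sqrtA (U1 n) - sqrtA (U1 (n-1))‖^2
            - ‖sqrtA (U1 n) - sqrtA (U1 n)‖^2
            - 2 * ⟪sqrtA (U1 n), sqrtA (F1 n)⟫)
        - ∑ j ∈ Finset.Ico 1 n, θ n j * (‖sqrtA (U1 n)‖^2 - ‖sqrtA (U1 (n-1))‖^2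
            + ‖sqrtA (U1 j) - sqrtA (U1 (n-1))‖^2
            - ‖sqrtA (U1 j) - sqrtA (U1 n)‖^2
            - 2 * ⟪sqrtA (U1 j), sqrtA (F1 n)⟫)
        = 2 * ⟪F2 n, U2 n⟫ := by
      have hs : ∑ j ∈ Finset.Ico 1 n, θ n j * (‖sqrtA (U1 n)‖^2 - ‖sqrtA (U1 (n-1))‖^2
            + ‖sqrtA (U1 j) - sqrtA (U1 (n-1))‖^2
            - ‖sqrtA (U1 j) - sqrtA (U1 n)‖^2
            - 2 * ⟪sqrtA (U1 j), sqrtA (F1 n)⟫)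
          = ∑ j ∈ Finset.Ico 1 n, 2 * (k n * θ n j * ⟪sqrtA (U1 j), sqrtA (U2 n)⟫) := by
        refine Finset.sum_congr rfl (fun j hj => ?_)
        have k1 := key (U1 j)
        have p1 := polar (sqrtA (U1 j)) (sqrtA (U1 n))
        have p2 := polar (sqrtA (U1 j)) (sqrtA (U1 (n-1)))
        have hin : ⟪sqrtA (U1 j), sqrtA (U1 n)⟫ - ⟪sqrtA (U1 j), sqrtA (U1 (n-1))⟫
            = (‖sqrtA (U1 n)‖^2 - ‖sqrtA (U1 (n-1))‖^2
              + ‖sqrtA (U1 j) - sqrtA (U1 (n-1))‖^2 - ‖sqrtA (U1 j) - sqrtA (U1 n)‖^2)/2 := by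
          linarith
        linear_combination (-2*θ n j) * k1 - 2 * θ n j * hin
      have hs' : ∑ j ∈ Finset.Ico 1 n, θ n j * (‖sqrtA (U1 n)‖^2 - ‖sqrtA (U1 (n-1))‖^2
            + ‖sqrtA (U1 j) - sqrtA (U1 (n-1))‖^2
            - ‖sqrtA (U1 j) - sqrtA (U1 n)‖^2
            - 2 * ⟪sqrtA (U1 j), sqrtA (F1 n)⟫)
          = 2 * ∑ j ∈ Finset.Ico 1 n, k n * θ n j * ⟪sqrtA (U1 j), sqrtA (U2 n)⟫ := by
        rw [hs, Finset.mul_sum]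
      have k1 := key (U1 n)
      have p1 := polar (sqrtA (U1 n)) (sqrtA (U1 n))
      have p2 := polar (sqrtA (U1 n)) (sqrtA (U1 (n-1)))
      have pU : 2*⟪U2 n - U2 (n-1), U2 n⟫
          = ‖U2 n‖^2 - ‖U2 (n-1)‖^2 + ‖U2 n - U2 (n-1)‖^2 := by
        have q1 := norm_sub_sq_real (U2 n) (U2 (n-1))
        have q2 : ⟪U2 n - U2 (n-1), U2 n⟫ = ⟪U2 n, U2 n⟫ - ⟪U2 (n-1), U2 n⟫ :=
          inner_sub_left _ _ _
        have q3 : ⟪U2 (n-1), U2 n⟫ = ⟪U2 n, U2 (n-1)⟫ := real_inner_comm _ _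
        have q4 : ⟪U2 n, U2 n⟫ = ‖U2 n‖^2 := real_inner_self_eq_norm_sq _
        linarith
      linear_combination 2*e1 - ρ*pU - hs' - (2*(1 - θ n n))*k1 - (1 - θ n n)*p1
        + (1 - θ n n)*p2
    -- split the memory sum
    have hsplit4 : ∑ j ∈ Finset.Ico 1 n, θ n j * (‖sqrtA (U1 n)‖^2 - ‖sqrtA (U1 (n-1))‖^2
            + ‖sqrtA (U1 j) - sqrtA (U1 (n-1))‖^2
            - ‖sqrtA (U1 j) - sqrtA (U1 n)‖^2
            - 2 * ⟪sqrtA (U1 j), sqrtA (F1 n)⟫)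
        = (G n - θ n n) * (‖sqrtA (U1 n)‖^2 - ‖sqrtA (U1 (n-1))‖^2)
          + (∑ j ∈ Finset.Ico 1 n, θ n j * ‖sqrtA (U1 j) - sqrtA (U1 (n-1))‖^2)
          - (∑ j ∈ Finset.Ico 1 n, θ n j * ‖sqrtA (U1 j) - sqrtA (U1 n)‖^2)
          - 2*(∑ j ∈ Finset.Ico 1 n, θ n j * ⟪sqrtA (U1 j), sqrtA (F1 n)⟫) := by
      rw [← hGsplit, Finset.sum_mul, Finset.mul_sum, ← Finset.sum_add_distrib,
        ← Finset.sum_sub_distrib, ← Finset.sum_sub_distrib]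
      exact Finset.sum_congr rfl fun j _ => by ring
    have e5 : ρ * (‖U2 n‖^2 - ‖U2 (n-1)‖^2 + ‖U2 n - U2 (n-1)‖^2)
        + (1 - θ n n) * (‖sqrtA (U1 n)‖^2 - ‖sqrtA (U1 (n-1))‖^2
            + ‖sqrtA (U1 n) - sqrtA (U1 (n-1))‖^2
            - ‖sqrtA (U1 n) - sqrtA (U1 n)‖^2
            - 2 * ⟪sqrtA (U1 n), sqrtA (F1 n)⟫)
        - ((G n - θ n n) * (‖sqrtA (U1 n)‖^2 - ‖sqrtA (U1 (n-1))‖^2)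
          + (∑ j ∈ Finset.Ico 1 n, θ n j * ‖sqrtA (U1 j) - sqrtA (U1 (n-1))‖^2)
          - (∑ j ∈ Finset.Ico 1 n, θ n j * ‖sqrtA (U1 j) - sqrtA (U1 n)‖^2)
          - 2*(∑ j ∈ Finset.Ico 1 n, θ n j * ⟪sqrtA (U1 j), sqrtA (F1 n)⟫))
        = 2 * ⟪F2 n, U2 n⟫ := by
      rw [hsplit4] at e4
      exact e4
    have hdnn : ‖sqrtA (U1 n) - sqrtA (U1 n)‖^2 = 0 := by simp
    have hHold : Hh n = ∑ j ∈ Finset.Ico 1 n, θ n j * ‖sqrtA (U1 j) - sqrtA (U1 (n-1))‖^2 := rfl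
    have f4 : (if n < N then Hh (n+1) else 0)
        ≤ ∑ j ∈ Finset.Ico 1 n, θ n j * ‖sqrtA (U1 j) - sqrtA (U1 n)‖^2 := by
      by_cases hnN : n < N
      · rw [if_pos hnN]
        have hh : Hh (n+1) = ∑ j ∈ Finset.Ico 1 n, θ (n+1) j * ‖sqrtA (U1 j) - sqrtA (U1 n)‖^2 := by
          show (∑ j ∈ Finset.Ico 1 (n+1), θ (n+1) j * ‖sqrtA (U1 j) - sqrtA (U1 ((n+1)-1))‖^2) = _
          rw [Finset.sum_Ico_succ_top h1]
          simp
        rw [hh]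
        refine Finset.sum_le_sum fun j hj => ?_
        have hj' := Finset.mem_Ico.mp hj
        exact mul_le_mul_of_nonneg_right (hθmono n j hj'.1 hj'.2 hnN) (sq_nonneg _)
      · rw [if_neg hnN]
        exact Finset.sum_nonneg fun j hj => mul_nonneg
          (hθ0 n j (Finset.mem_Ico.mp hj).1 (le_of_lt (Finset.mem_Ico.mp hj).2) h2) (sq_nonneg _)
    have hF1n : 0 ≤ P * ‖sqrtA (F1 n)‖ := mul_nonneg hP0 (norm_nonneg _)
    have hF2n : 0 ≤ P * ‖F2 n‖ := mul_nonneg hP0 (norm_nonneg _)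
    have t1 : ⟪F2 n, U2 n⟫ ≤ P * ‖F2 n‖ := by
      calc ⟪F2 n, U2 n⟫ ≤ ‖F2 n‖ * ‖U2 n‖ := real_inner_le_norm _ _
        _ ≤ ‖F2 n‖ * P := mul_le_mul_of_nonneg_left (hPb n h2) (norm_nonneg _)
        _ = P * ‖F2 n‖ := mul_comm _ _
    have hgn : ∀ m, m ≤ N → ⟪sqrtA (U1 m), sqrtA (F1 n)⟫ ≤ P * ‖sqrtA (F1 n)‖ := by
      intro m hm
      calc ⟪sqrtA (U1 m), sqrtA (F1 n)⟫ ≤ ‖sqrtA (U1 m)‖ * ‖sqrtA (F1 n)‖ :=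
            real_inner_le_norm _ _
        _ ≤ P * ‖sqrtA (F1 n)‖ := mul_le_mul_of_nonneg_right (hPa m hm) (norm_nonneg _)
    have t2 : (1 - θ n n) * ⟪sqrtA (U1 n), sqrtA (F1 n)⟫ ≤ P * ‖sqrtA (F1 n)‖ := by
      have h1θ : 0 ≤ 1 - θ n n := by linarith
      calc (1 - θ n n) * ⟪sqrtA (U1 n), sqrtA (F1 n)⟫
          ≤ (1 - θ n n) * (P * ‖sqrtA (F1 n)‖) := mul_le_mul_of_nonneg_left (hgn n h2) h1θ
        _ ≤ 1 * (P * ‖sqrtA (F1 n)‖) := mul_le_mul_of_nonneg_right (by linarith) hF1n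
        _ = P * ‖sqrtA (F1 n)‖ := one_mul _
    have t3 : -(∑ j ∈ Finset.Ico 1 n, θ n j * ⟪sqrtA (U1 j), sqrtA (F1 n)⟫)
        ≤ P * ‖sqrtA (F1 n)‖ := by
      have hlow : ∀ j ∈ Finset.Ico 1 n, θ n j * (-(P * ‖sqrtA (F1 n)‖))
          ≤ θ n j * ⟪sqrtA (U1 j), sqrtA (F1 n)⟫ := by
        intro j hj
        have hj' := Finset.mem_Ico.mp hj
        have hjN : j ≤ N := le_trans (le_of_lt hj'.2) h2
        have hneg : -(P * ‖sqrtA (F1 n)‖) ≤ ⟪sqrtA (U1 j), sqrtA (F1 n)⟫ := by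
          have h := real_inner_le_norm (sqrtA (U1 j)) (-(sqrtA (F1 n)))
          rw [inner_neg_right, norm_neg] at h
          have h2' : ‖sqrtA (U1 j)‖ * ‖sqrtA (F1 n)‖ ≤ P * ‖sqrtA (F1 n)‖ :=
            mul_le_mul_of_nonneg_right (hPa j hjN) (norm_nonneg _)
          linarith
        exact mul_le_mul_of_nonneg_left hneg (hθ0 n j hj'.1 (le_of_lt hj'.2) h2)
      have hsum := Finset.sum_le_sum hlow
      rw [← Finset.sum_mul, hGsplit] at hsum
      have hc : (G n - θ n n) * (P * ‖sqrtA (F1 n)‖) ≤ 1 * (P * ‖sqrtA (F1 n)‖) :=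
        mul_le_mul_of_nonneg_right (by linarith) hF1n
      nlinarith [hsum]
    have hΔ : 0 ≤ ρ * ‖U2 n - U2 (n-1)‖^2 := mul_nonneg (le_of_lt hρ) (sq_nonneg _)
    have hδ1 : 0 ≤ (1 - θ n n) * ‖sqrtA (U1 n) - sqrtA (U1 (n-1))‖^2 :=
      mul_nonneg (by linarith) (sq_nonneg _)
    rw [hHold]
    rw [hdnn] at e5
    linarith only [e5, t1, t2, t3, f4, hΔ, hδ1, hF1n, hF2n]
  -- summed estimate
  have main : ∀ m, m ≤ N →
      ρ * ‖U2 m‖^2 + (1 - G m) * ‖sqrtA (U1 m)‖^2 + (if m < N then Hh (m+1) else 0)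
        ≤ ρ * ‖U2 0‖^2 + ‖sqrtA (U1 0)‖^2
          + ∑ n ∈ Icc 1 m, 4*P*(‖sqrtA (F1 n)‖ + ‖F2 n‖) := by
    intro m
    induction m with
    | zero =>
      intro _
      have h01 : Hh 1 = 0 := by simp [hHh]
      rw [if_pos (lt_of_lt_of_le Nat.zero_lt_one hN), h01, hG0]
      simp
    | succ m ih =>
      intro hm1
      have hmN : m ≤ N := le_trans (Nat.le_succ m) hm1
      have hmlt : m < N := hm1
      have ihm := ih hmN
      rw [if_pos hmlt] at ihm
      have st := step (m+1) (Nat.le_add_left 1 m) hm1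
      simp only [Nat.add_sub_cancel] at st
      have hGm : G m ≤ G (m+1) := by
        have := hGmono (m+1) (Nat.le_add_left 1 m) hm1
        simpa using this
      have ha2 : (0:ℝ) ≤ ‖sqrtA (U1 m)‖^2 := sq_nonneg _
      have hsum : ∑ n ∈ Icc 1 (m+1), 4*P*(‖sqrtA (F1 n)‖ + ‖F2 n‖)
          = ∑ n ∈ Icc 1 m, 4*P*(‖sqrtA (F1 n)‖ + ‖F2 n‖)
            + 4*P*(‖sqrtA (F1 (m+1))‖ + ‖F2 (m+1)‖) :=
        Finset.sum_Icc_succ_top (Nat.le_add_left 1 m) _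
      rw [hsum]
      nlinarith [st, ihm, mul_le_mul_of_nonneg_right hGm ha2]
  -- bound on P
  set Dtot : ℝ := ∑ n ∈ Icc 1 N, (‖sqrtA (F1 n)‖ + ‖F2 n‖) with hDtot
  have hD0 : 0 ≤ Dtot :=
    Finset.sum_nonneg fun n _ => add_nonneg (norm_nonneg _) (norm_nonneg _)
  set E0 : ℝ := ρ * ‖U2 0‖^2 + ‖sqrtA (U1 0)‖^2 with hE0
  have hE0nn : 0 ≤ E0 :=
    add_nonneg (mul_nonneg (le_of_lt hρ) (sq_nonneg _)) (sq_nonneg _)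
  have hPsq : min ρ (1-γ) * P^2 ≤ E0 + 4*P*Dtot := by
    obtain ⟨m, hmem, hPm⟩ := Finset.exists_mem_eq_sup' hne
      (fun m => max ‖sqrtA (U1 m)‖ ‖U2 m‖)
    have hmN : m ≤ N := (Finset.mem_Icc.mp hmem).2
    have hm := main m hmN
    have hIf : 0 ≤ (if m < N then Hh (m+1) else 0) := by
      by_cases hc : m < N
      · rw [if_pos hc]
        exact Finset.sum_nonneg fun j hj => mul_nonneg
          (hθ0 (m+1) j (Finset.mem_Ico.mp hj).1
            (Nat.le_of_lt_succ (Nat.lt_succ_of_lt (Finset.mem_Ico.mp hj).2)) hc)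
          (sq_nonneg _)
      · rw [if_neg hc]
    have hGle : G m ≤ γ := hGγ m hmN
    have hsum_le : ∑ n ∈ Icc 1 m, 4*P*(‖sqrtA (F1 n)‖ + ‖F2 n‖)
        ≤ ∑ n ∈ Icc 1 N, 4*P*(‖sqrtA (F1 n)‖ + ‖F2 n‖) := by
      refine Finset.sum_le_sum_of_subset_of_nonneg ?_ ?_
      · exact Finset.Icc_subset_Icc_right hmN
      · intro i _ _
        exact mul_nonneg (by positivity) (add_nonneg (norm_nonneg _) (norm_nonneg _))
    have hsum_eq : ∑ n ∈ Icc 1 N, 4*P*(‖sqrtA (F1 n)‖ + ‖F2 n‖) = 4*P*Dtot := by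
      rw [hDtot, Finset.mul_sum]
    have hen : ρ * ‖U2 m‖^2 + (1-γ) * ‖sqrtA (U1 m)‖^2 ≤ E0 + 4*P*Dtot := by
      have h1' : (1-γ) * ‖sqrtA (U1 m)‖^2 ≤ (1 - G m) * ‖sqrtA (U1 m)‖^2 :=
        mul_le_mul_of_nonneg_right (by linarith) (sq_nonneg _)
      rw [hsum_eq] at hsum_le
      linarith
    -- P = max at m
    have hPm' : P = max ‖sqrtA (U1 m)‖ ‖U2 m‖ := by rw [hP]; exact hPm
    rcases max_cases ‖sqrtA (U1 m)‖ ‖U2 m‖ with ⟨hmx, _⟩ | ⟨hmx, _⟩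
    · rw [hPm', hmx]
      have : min ρ (1-γ) ≤ 1-γ := min_le_right _ _
      nlinarith [sq_nonneg ‖U2 m‖, mul_nonneg (le_of_lt hρ) (sq_nonneg ‖U2 m‖)]
    · rw [hPm', hmx]
      have : min ρ (1-γ) ≤ ρ := min_le_left _ _
      nlinarith [sq_nonneg ‖sqrtA (U1 m)‖]
  -- solve the quadratic inequality
  set c1 : ℝ := min ρ (1-γ) with hc1
  set c2 : ℝ := max ρ (1:ℝ) with hc2
  have hE0c2 : E0 ≤ c2 * (‖sqrtA (U1 0)‖ + ‖U2 0‖)^2 := by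
    have h1 : ρ ≤ c2 := le_max_left _ _
    have h2 : (1:ℝ) ≤ c2 := le_max_right _ _
    have hab : 0 ≤ ‖sqrtA (U1 0)‖ * ‖U2 0‖ := mul_nonneg (norm_nonneg _) (norm_nonneg _)
    nlinarith [sq_nonneg ‖U2 0‖, sq_nonneg ‖sqrtA (U1 0)‖]
  have hc10 : c1 ≠ 0 := ne_of_gt hc1p
  clear_value Dtot E0 c1 c2
  have hPle : P ≤ 4*Dtot/c1 + Real.sqrt (2*E0/c1) := by
    set Q : ℝ := 4*Dtot/c1 with hQ
    set S : ℝ := Real.sqrt (2*E0/c1) with hS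
    have hQ0 : 0 ≤ Q := div_nonneg (by linarith) (le_of_lt hc1p)
    have hS0 : 0 ≤ S := Real.sqrt_nonneg _
    have hcQ : c1 * Q = 4*Dtot := by rw [hQ]; field_simp
    have hcS : c1 * S^2 = 2*E0 := by
      rw [hS, Real.sq_sqrt (div_nonneg (by linarith) (le_of_lt hc1p))]
      field_simp
    by_cases hPQ : P ≤ Q
    · linarith
    · push_neg at hPQ
      by_contra hcon
      push_neg at hcon
      have hx : S < P - Q := by linarith
      have hcQP : c1 * Q * P = 4 * Dtot * P := by rw [hcQ]
      have h1 : c1 * P * (P - Q) ≤ E0 := by nlinarith [hPsq, hcQP]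
      have h2 : c1 * (P - Q) * (P - Q) ≤ c1 * P * (P - Q) := by
        have hpq : (0:ℝ) ≤ P - Q := by linarith
        have hle : c1 * (P - Q) ≤ c1 * P := by
          apply mul_le_mul_of_nonneg_left _ (le_of_lt hc1p)
          linarith
        exact mul_le_mul_of_nonneg_right hle hpq
      have h3 : c1 * S * S < c1 * (P - Q) * (P - Q) := by
        have h3a : c1 * S * S ≤ c1 * S * (P - Q) :=
          mul_le_mul_of_nonneg_left (le_of_lt hx) (mul_nonneg (le_of_lt hc1p) hS0)
        have h3b : c1 * S * (P - Q) < c1 * (P - Q) * (P - Q) := by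
          apply mul_lt_mul_of_pos_right _ (by linarith : (0:ℝ) < P - Q)
          exact mul_lt_mul_of_pos_left hx hc1p
        linarith
      have h4 : c1 * S * S = 2 * E0 := by nlinarith [hcS]
      linarith
  have hsqrtle : Real.sqrt (2*E0/c1) ≤ Real.sqrt (2*c2/c1) * (‖sqrtA (U1 0)‖ + ‖U2 0‖) := by
    have h1 : 2*E0/c1 ≤ (2*c2/c1) * (‖sqrtA (U1 0)‖ + ‖U2 0‖)^2 := by
      rw [div_mul_eq_mul_div, div_le_div_iff₀ hc1p hc1p]
      nlinarith [hE0c2, hc1p]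
    calc Real.sqrt (2*E0/c1) ≤ Real.sqrt ((2*c2/c1) * (‖sqrtA (U1 0)‖ + ‖U2 0‖)^2) :=
          Real.sqrt_le_sqrt h1
      _ = Real.sqrt (2*c2/c1) * (‖sqrtA (U1 0)‖ + ‖U2 0‖) := by
          rw [Real.sqrt_mul (div_nonneg (by linarith) (le_of_lt hc1p)),
            Real.sqrt_sq (add_nonneg (norm_nonneg _) (norm_nonneg _))]
  -- conclude
  have haN : ‖sqrtA (U1 N)‖ ≤ P := hPa N le_rfl
  have hbN : ‖U2 N‖ ≤ P := hPb N le_rfl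
  have hs2 : 0 ≤ Real.sqrt (2*c2/c1) := Real.sqrt_nonneg _
  have hab0 : 0 ≤ ‖sqrtA (U1 0)‖ + ‖U2 0‖ := add_nonneg (norm_nonneg _) (norm_nonneg _)
  have h81 : 8/c1 * Dtot ≤ (8/c1 + 2*Real.sqrt (2*c2/c1)) * Dtot := by
    apply mul_le_mul_of_nonneg_right _ hD0
    linarith
  have h82 : 2*Real.sqrt (2*c2/c1) * (‖sqrtA (U1 0)‖ + ‖U2 0‖)
      ≤ (8/c1 + 2*Real.sqrt (2*c2/c1)) * (‖sqrtA (U1 0)‖ + ‖U2 0‖) := by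
    apply mul_le_mul_of_nonneg_right _ hab0
    have : 0 < 8/c1 := div_pos (by norm_num) hc1p
    linarith
  have hfin : ‖sqrtA (U1 N)‖ + ‖U2 N‖ ≤ 2*P := by linarith
  have hP2 : 2*P ≤ 8/c1 * Dtot + 2*Real.sqrt (2*c2/c1) * (‖sqrtA (U1 0)‖ + ‖U2 0‖) := by
    have h8 : 2*(4*Dtot/c1) = 8/c1 * Dtot := by ring
    linarith [hPle, hsqrtle, h8]
  calc ‖sqrtA (U1 N)‖ + ‖U2 N‖ ≤ 2*P := hfin
    _ ≤ 8/c1 * Dtot + 2*Real.sqrt (2*c2/c1) * (‖sqrtA (U1 0)‖ + ‖U2 0‖) := hP2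
    _ ≤ (8/c1 + 2*Real.sqrt (2*c2/c1)) * Dtot
        + (8/c1 + 2*Real.sqrt (2*c2/c1)) * (‖sqrtA (U1 0)‖ + ‖U2 0‖) := by
        linarith [h81, h82]
    _ = (8/c1 + 2*Real.sqrt (2*c2/c1)) * (‖sqrtA (U1 0)‖ + ‖U2 0‖ + Dtot) := by ring

set_option maxHeartbeats 2000000 in
/-- Stability estimate for the dG(0) scheme (Theorem 4.1, case `l = 0`):
there is a constant `C` depending only on `γ` and `ρ` such that, for every
partition, initial data and loads, the dG(0) approximation satisfies
`‖A^{1/2} U_{1,N}‖ + ‖U_{2,N}‖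
   ≤ C (‖A^{1/2} u_0‖ + ‖v_0‖ + ∫_0^T (‖A^{1/2} f_1‖ + ‖f_2‖) dt)`.
Here `sqrtA` is the positive square root `A^{1/2}` of `A`. -/
theorem dG0_stability.{u} (γ ρ : ℝ) (hγ0 : 0 < γ) (hγ1 : γ < 1) (hρ : 0 < ρ) :
    ∃ C : ℝ, 0 < C ∧
      ∀ (H : Type u) [NormedAddCommGroup H] [InnerProductSpace ℝ H] [CompleteSpace H],
      ∀ (N : ℕ), 1 ≤ N → ∀ (tp : ℕ → ℝ), tp 0 = 0 → (∀ n < N, tp n < tp (n + 1)) →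
      ∀ (β : ℝ → ℝ), (∀ s ∈ Set.Ioi (0:ℝ), 0 ≤ β s) → AntitoneOn β (Set.Ioi 0) →
        LocallyIntegrableOn β (Set.Ioi 0) → (∫ s in Set.Ioi (0:ℝ), β s) = γ →
      ∀ (A sqrtA : H →L[ℝ] H),
        (∀ x y : H, ⟪A x, y⟫ = ⟪x, A y⟫) →
        (∃ c > 0, ∀ x : H, c * ‖x‖ ^ 2 ≤ ⟪A x, x⟫) →
        (∀ x y : H, ⟪sqrtA x, y⟫ = ⟪x, sqrtA y⟫) →
        (∀ x : H, 0 ≤ ⟪sqrtA x, x⟫) →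
        (∀ x : H, sqrtA (sqrtA x) = A x) →
      ∀ (u0 v0 : H) (f1 f2 : ℝ → H),
        IntegrableOn f1 (Set.Icc 0 (tp N)) → IntegrableOn f2 (Set.Icc 0 (tp N)) →
      ∀ (U1 U2 : ℕ → H), U1 0 = u0 → U2 0 = v0 →
        (∀ n : ℕ, 1 ≤ n → n ≤ N →
          U1 n - U1 (n - 1) = kstep tp n • U2 n + kstep tp n • iavg tp f1 n) →
        (∀ n : ℕ, 1 ≤ n → n ≤ N →
          ρ • (U2 n - U2 (n - 1)) + (kstep tp n - qweight β tp n n) • A (U1 n)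
              - ∑ j ∈ Finset.Ico 1 n, qweight β tp n j • A (U1 j)
            = kstep tp n • iavg tp f2 n) →
      ‖sqrtA (U1 N)‖ + ‖U2 N‖
        ≤ C * (‖sqrtA u0‖ + ‖v0‖
            + ∫ t in (0:ℝ)..(tp N), (‖sqrtA (f1 t)‖ + ‖f2 t‖)) := by
  have hc1p : (0:ℝ) < min ρ (1-γ) := lt_min hρ (by linarith)
  refine ⟨8 / min ρ (1-γ) + 2 * Real.sqrt (2 * max ρ 1 / min ρ (1-γ)), ?_, ?_⟩
  · have h1 : 0 < 8 / min ρ (1-γ) := div_pos (by norm_num) hc1p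
    have h2 := Real.sqrt_nonneg (2 * max ρ 1 / min ρ (1-γ))
    linarith
  intro H _ _ _ N hN tp htp0 htp β hβnn hβanti hβloc hβint A sqrtA hA hcoer hsa hsqpos
    hsq u0 v0 f1 f2 hf1 hf2 U1 U2 hU10 hU20 heq1 heq2
  -- partition facts
  have htple : ∀ j, j ≤ N → ∀ i, i ≤ j → tp i ≤ tp j := by
    intro j
    induction j with
    | zero => intro _ i hi; simp [Nat.le_zero.mp hi]
    | succ j ih =>
      intro hjN i hi
      by_cases hij : i ≤ j
      · exact le_trans (ih (by omega) i hij) (le_of_lt (htp j (by omega)))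
      · have : i = j+1 := by omega
        simp [this]
  have htplt : ∀ i j, i < j → j ≤ N → tp i < tp j := by
    intro i j hij hjN
    have h1 : tp i ≤ tp (j-1) := htple (j-1) (by omega) i (by omega)
    have h2 : tp (j-1) < tp j := by
      have h := htp (j-1) (by omega)
      have he : j - 1 + 1 = j := by omega
      rwa [he] at h
    linarith
  have htp0le : ∀ i, i ≤ N → 0 ≤ tp i := by
    intro i hi
    have := htple i hi 0 (Nat.zero_le i)
    rwa [htp0] at this
  have hkpos : ∀ n, 1 ≤ n → n ≤ N → 0 < kstep tp n := by
    intro n h1 h2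
    have := htplt (n-1) n (by omega) h2
    unfold kstep; linarith
  -- kernel integrability
  have hβInt : IntegrableOn β (Set.Ioi 0) := by
    by_contra hc
    rw [MeasureTheory.integral_undef hc] at hβint
    exact absurd hβint.symm (ne_of_gt hγ0)
  have hβII : ∀ x y : ℝ, 0 ≤ x → 0 ≤ y → IntervalIntegrable β volume x y := by
    intro x y hx hy
    rw [intervalIntegrable_iff]
    apply hβInt.mono_set
    intro t ht
    exact lt_of_le_of_lt (le_min hx hy) ht.1
  -- the primitive of β
  set Bf : ℝ → ℝ := fun x => ∫ u in (0:ℝ)..(max x 0), β u with hBf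
  have hBfneg : ∀ x, x ≤ 0 → Bf x = 0 := by
    intro x hx; simp [hBf, max_eq_right hx]
  have hBfdiff : ∀ x y, 0 ≤ x → x ≤ y → Bf y - Bf x = ∫ u in Set.Ioc x y, β u := by
    intro x y hx hxy
    have hmx : max x 0 = x := max_eq_left hx
    have hmy : max y 0 = y := max_eq_left (le_trans hx hxy)
    simp only [hBf, hmx, hmy]
    rw [intervalIntegral.integral_interval_sub_left (hβII 0 y le_rfl (le_trans hx hxy))
      (hβII 0 x le_rfl hx)]
    exact intervalIntegral.integral_of_le hxy
  have hBfnn : ∀ x, 0 ≤ Bf x := by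
    intro x
    simp only [hBf]
    rw [intervalIntegral.integral_of_le (le_max_right x 0)]
    exact setIntegral_nonneg measurableSet_Ioc (fun u hu => hβnn u hu.1)
  have hBfle : ∀ x, Bf x ≤ γ := by
    intro x
    simp only [hBf]
    rw [intervalIntegral.integral_of_le (le_max_right x 0), ← hβint]
    refine setIntegral_mono_set hβInt ?_ ?_
    · exact (ae_restrict_iff' measurableSet_Ioi).mpr
        (Filter.Eventually.of_forall (fun u hu => hβnn u hu))
    · exact Set.Ioc_subset_Ioi_self.eventuallyLE
  have hBfmono : Monotone Bf := by
    intro x y hxy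
    rcases le_or_gt y 0 with hy | hy
    · rw [hBfneg x (le_trans hxy hy), hBfneg y hy]
    · rcases le_or_gt x 0 with hx | hx
      · rw [hBfneg x hx]; exact hBfnn y
      · have hd := hBfdiff x y (le_of_lt hx) hxy
        have h0 : 0 ≤ ∫ u in Set.Ioc x y, β u :=
          setIntegral_nonneg measurableSet_Ioc
            (fun u hu => hβnn u (lt_trans hx hu.1))
        linarith
  have hBfII : ∀ (c a b : ℝ), IntervalIntegrable (fun t => Bf (t - c)) volume a b := by
    intro c a b
    have hm : Monotone (fun t => Bf (t - c)) :=
      hBfmono.comp (fun u v huv => by simpa using sub_le_sub_right huv c)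
    exact hm.intervalIntegrable
  have hBfII' : ∀ (a b : ℝ), IntervalIntegrable Bf volume a b :=
    fun a b => hBfmono.intervalIntegrable
  -- representation of the quadrature weights
  have hqw : ∀ n j, 1 ≤ j → j ≤ n → n ≤ N →
      qweight β tp n j
        = ∫ t in (tp (n-1))..(tp n), (Bf (t - tp (j-1)) - Bf (t - tp j)) := by
    intro n j hj hjn hnN
    unfold qweight
    refine intervalIntegral.integral_congr ?_
    intro t ht
    dsimp only
    rw [Set.uIcc_of_le (htple n hnN (n-1) (by omega))] at ht
    obtain ⟨ht1, ht2⟩ := ht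
    have hj1n : tp (j-1) ≤ tp (n-1) := htple (n-1) (by omega) (j-1) (by omega)
    have h0j1 : 0 ≤ tp (j-1) := htp0le (j-1) (by omega)
    have hmin1 : tp (j-1) ≤ min (tp j) t :=
      le_min (htple j (le_trans hjn hnN) (j-1) (by omega)) (le_trans hj1n ht1)
    have hmint : min (tp j) t ≤ t := min_le_right _ _
    have hsub : (∫ s in (tp (j-1))..(min (tp j) t), β (t - s))
        = ∫ u in (t - min (tp j) t)..(t - tp (j-1)), β u :=
      intervalIntegral.integral_comp_sub_left _ t
    rw [hsub]
    have h1 : 0 ≤ t - min (tp j) t := by linarith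
    have h2 : t - min (tp j) t ≤ t - tp (j-1) := by linarith
    have hd := hBfdiff (t - min (tp j) t) (t - tp (j-1)) h1 h2
    rw [intervalIntegral.integral_of_le h2, ← hd]
    congr 1
    rcases le_total (tp j) t with hjt | hjt
    · rw [min_eq_left hjt]
    · rw [min_eq_right hjt, hBfneg (t - t) (by linarith), hBfneg (t - tp j) (by linarith)]
  -- the normalized weights
  set θ : ℕ → ℕ → ℝ := fun n j => qweight β tp n j / kstep tp n with hθdef
  set G : ℕ → ℝ := fun n =>
    if n = 0 then 0 else (∫ t in (tp (n-1))..(tp n), Bf t) / kstep tp n with hGdef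
  have hqwnn : ∀ n j, 1 ≤ j → j ≤ n → n ≤ N → 0 ≤ qweight β tp n j := by
    intro n j h1 h2 h3
    rw [hqw n j h1 h2 h3]
    refine intervalIntegral.integral_nonneg (htple n h3 (n-1) (by omega)) ?_
    intro u _
    have : tp (j-1) ≤ tp j := htple j (le_trans h2 h3) (j-1) (by omega)
    have := hBfmono (by linarith : u - tp j ≤ u - tp (j-1))
    linarith
  have hθ0' : ∀ n j, 1 ≤ j → j ≤ n → n ≤ N → 0 ≤ θ n j := by
    intro n j h1 h2 h3
    exact div_nonneg (hqwnn n j h1 h2 h3) (le_of_lt (hkpos n (le_trans h1 h2) h3))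
  have hG0' : G 0 = 0 := by simp [hGdef]
  -- sum of the weights
  have hqwsum : ∀ n, 1 ≤ n → n ≤ N →
      (∑ j ∈ Finset.Icc 1 n, qweight β tp n j) = ∫ t in (tp (n-1))..(tp n), Bf t := by
    intro n h1 h2
    have hstep1 : (∑ j ∈ Finset.Icc 1 n, qweight β tp n j)
        = ∑ j ∈ Finset.Icc 1 n,
            ∫ t in (tp (n-1))..(tp n), (Bf (t - tp (j-1)) - Bf (t - tp j)) := by
      refine Finset.sum_congr rfl fun j hj => ?_
      obtain ⟨hj1, hj2⟩ := Finset.mem_Icc.mp hj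
      exact hqw n j hj1 hj2 h2
    rw [hstep1, ← intervalIntegral.integral_finset_sum]
    · refine intervalIntegral.integral_congr ?_
      intro t ht
      rw [Set.uIcc_of_le (htple n h2 (n-1) (by omega))] at ht
      have htel : ∑ j ∈ Finset.Icc 1 n, (Bf (t - tp (j-1)) - Bf (t - tp j))
          = Bf (t - tp 0) - Bf (t - tp n) := by
        have hrw : Finset.Icc 1 n = Finset.Ico 1 (n+1) := rfl
        rw [hrw, Finset.sum_Ico_eq_sum_range]
        have hsimp : ∀ i, (1 + i) - 1 = i := fun i => by omega
        have : ∀ i, Bf (t - tp ((1+i) - 1)) - Bf (t - tp (1+i))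
            = Bf (t - tp i) - Bf (t - tp (i+1)) := by
          intro i; rw [hsimp i, Nat.add_comm 1 i]
        simp only [this]
        have := Finset.sum_range_sub' (fun i => Bf (t - tp i)) n
        simpa using this
      dsimp only
      rw [htel, htp0, sub_zero, hBfneg (t - tp n) (by linarith [ht.2]), sub_zero]
    · intro j _
      exact (hBfII (tp (j-1)) _ _).sub (hBfII (tp j) _ _)
  have hGsum' : ∀ n, 1 ≤ n → n ≤ N → (∑ j ∈ Finset.Icc 1 n, θ n j) = G n := by
    intro n h1 h2
    have hGn : G n = (∫ t in (tp (n-1))..(tp n), Bf t) / kstep tp n := by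
      rw [hGdef]; simp only []
      rw [if_neg (by omega : ¬ n = 0)]
    rw [hGn, ← hqwsum n h1 h2, hθdef]
    simp only []
    rw [Finset.sum_div]
  have hGγ' : ∀ n, n ≤ N → G n ≤ γ := by
    intro n h2
    rcases Nat.eq_zero_or_pos n with h0 | h1
    · rw [h0, hG0']; linarith
    · have hGn : G n = (∫ t in (tp (n-1))..(tp n), Bf t) / kstep tp n := by
        rw [hGdef]; simp only []
        rw [if_neg (by omega : ¬ n = 0)]
      rw [hGn, div_le_iff₀ (hkpos n h1 h2)]
      have hab : tp (n-1) ≤ tp n := htple n h2 (n-1) (by omega)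
      calc (∫ t in (tp (n-1))..(tp n), Bf t) ≤ ∫ _t in (tp (n-1))..(tp n), γ :=
            intervalIntegral.integral_mono_on hab (hBfII' _ _)
              intervalIntegrable_const (fun t _ => hBfle t)
        _ = γ * kstep tp n := by
            rw [intervalIntegral.integral_const, smul_eq_mul]
            unfold kstep; ring
  have hGmono' : ∀ n, 1 ≤ n → n ≤ N → G (n-1) ≤ G n := by
    intro n h1 h2
    have hGn : G n = (∫ t in (tp (n-1))..(tp n), Bf t) / kstep tp n := by
      rw [hGdef]; simp only []
      rw [if_neg (by omega : ¬ n = 0)]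
    rcases Nat.lt_or_ge n 2 with hn2 | hn2
    · have : n = 1 := by omega
      subst this
      rw [hG0'] at *
      rw [hGn]
      refine div_nonneg ?_ (le_of_lt (hkpos 1 le_rfl h2))
      exact intervalIntegral.integral_nonneg (htple 1 h2 0 (by omega)) (fun u _ => hBfnn u)
    · have hm1 : (1:ℕ) ≤ n - 1 := by omega
      have hmN : n - 1 ≤ N := by omega
      have hGm : G (n-1) = (∫ t in (tp ((n-1)-1))..(tp (n-1)), Bf t) / kstep tp (n-1) := by
        rw [hGdef]; simp only []
        rw [if_neg (by omega : ¬ n - 1 = 0)]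
      have hk1 := hkpos (n-1) hm1 hmN
      have hk2 := hkpos n h1 h2
      have hab1 : tp ((n-1)-1) ≤ tp (n-1) := htple (n-1) hmN ((n-1)-1) (by omega)
      have hab2 : tp (n-1) ≤ tp n := htple n h2 (n-1) (by omega)
      have hub : (∫ t in (tp ((n-1)-1))..(tp (n-1)), Bf t) ≤ Bf (tp (n-1)) * kstep tp (n-1) := by
        calc (∫ t in (tp ((n-1)-1))..(tp (n-1)), Bf t)
            ≤ ∫ _t in (tp ((n-1)-1))..(tp (n-1)), Bf (tp (n-1)) :=
              intervalIntegral.integral_mono_on hab1 (hBfII' _ _)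
                intervalIntegrable_const (fun t ht => hBfmono ht.2)
          _ = Bf (tp (n-1)) * kstep tp (n-1) := by
              rw [intervalIntegral.integral_const, smul_eq_mul]
              unfold kstep; ring
      have hlb : Bf (tp (n-1)) * kstep tp n ≤ ∫ t in (tp (n-1))..(tp n), Bf t := by
        calc Bf (tp (n-1)) * kstep tp n
            = ∫ _t in (tp (n-1))..(tp n), Bf (tp (n-1)) := by
              rw [intervalIntegral.integral_const, smul_eq_mul]
              unfold kstep; ring
          _ ≤ ∫ t in (tp (n-1))..(tp n), Bf t :=
              intervalIntegral.integral_mono_on hab2 intervalIntegrable_const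
                (hBfII' _ _) (fun t ht => hBfmono ht.1)
      rw [hGn, hGm]
      rw [div_le_div_iff₀ hk1 hk2]
      calc (∫ t in (tp ((n-1)-1))..(tp (n-1)), Bf t) * kstep tp n
          ≤ (Bf (tp (n-1)) * kstep tp (n-1)) * kstep tp n :=
            mul_le_mul_of_nonneg_right hub (le_of_lt hk2)
        _ = (Bf (tp (n-1)) * kstep tp n) * kstep tp (n-1) := by ring
        _ ≤ (∫ t in (tp (n-1))..(tp n), Bf t) * kstep tp (n-1) :=
            mul_le_mul_of_nonneg_right hlb (le_of_lt hk1)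
  -- pointwise monotonicity of the kernel averages
  have hψcomp : ∀ c c' t t' : ℝ, 0 ≤ c → c ≤ c' → c' < t → t ≤ t' →
      Bf (t' - c) - Bf (t' - c') ≤ Bf (t - c) - Bf (t - c') := by
    intro c c' t t' hc hcc hct htt
    have h1 : 0 < t - c' := by linarith
    have h2 : t - c' ≤ t - c := by linarith
    have h1' : 0 < t' - c' := by linarith
    have h2' : t' - c' ≤ t' - c := by linarith
    rw [show Bf (t - c) - Bf (t - c') = ∫ u in Set.Ioc (t - c') (t - c), β u from
          hBfdiff (t - c') (t - c) (le_of_lt h1) h2,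
        show Bf (t' - c) - Bf (t' - c') = ∫ u in Set.Ioc (t' - c') (t' - c), β u from
          hBfdiff (t' - c') (t' - c) (le_of_lt h1') h2']
    set δ := t' - t with hδ
    have hδ0 : 0 ≤ δ := by simp [hδ]; linarith
    have etrans : (∫ u in Set.Ioc (t'-c') (t'-c), β u)
        = ∫ u in Set.Ioc (t-c') (t-c), β (u + δ) := by
      rw [← intervalIntegral.integral_of_le h2', ← intervalIntegral.integral_of_le h2]
      rw [intervalIntegral.integral_comp_add_right β δ]
      congr 1 <;> simp [hδ] <;> ring
    rw [etrans]
    have hint1 : IntervalIntegrable (fun u => β (u + δ)) volume (t - c') (t - c) := by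
      have h := (hβII (t - c' + δ) (t - c + δ) (by linarith) (by linarith)).comp_add_right δ
      have e1 : t - c' + δ - δ = t - c' := by ring
      have e2 : t - c + δ - δ = t - c := by ring
      rwa [e1, e2] at h
    have hint2 : IntervalIntegrable β volume (t - c') (t - c) :=
      hβII _ _ (le_of_lt h1) (by linarith)
    have hio1 : IntegrableOn (fun u => β (u + δ)) (Set.Ioc (t-c') (t-c)) := by
      have := intervalIntegrable_iff.mp hint1
      rwa [Set.uIoc_of_le h2] at this
    have hio2 : IntegrableOn β (Set.Ioc (t-c') (t-c)) := by
      have := intervalIntegrable_iff.mp hint2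
      rwa [Set.uIoc_of_le h2] at this
    refine setIntegral_mono_on hio1 hio2 measurableSet_Ioc ?_
    intro u hu
    have hu0 : 0 < u := lt_trans h1 hu.1
    exact hβanti (Set.mem_Ioi.mpr hu0) (Set.mem_Ioi.mpr (by linarith)) (by linarith)
  have hθmono' : ∀ n j, 1 ≤ j → j < n → n + 1 ≤ N → θ (n+1) j ≤ θ n j := by
    intro n j hj1 hjn hnN
    have hnN' : n ≤ N := by omega
    have hn1 : 1 ≤ n := by omega
    have hq1 := hqw n j hj1 (le_of_lt hjn) hnN'
    have hq2 := hqw (n+1) j hj1 (by omega) hnN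
    have hk1 := hkpos n hn1 hnN'
    have hk2 := hkpos (n+1) (by omega) hnN
    have hsimp1 : (n + 1 : ℕ) - 1 = n := by omega
    rw [hsimp1] at hq2
    have hc0 : 0 ≤ tp (j-1) := htp0le (j-1) (by omega)
    have hcc : tp (j-1) ≤ tp j := htple j (by omega) (j-1) (by omega)
    have hjlt : tp j < tp n := htplt j n hjn hnN'
    have hjle : tp j ≤ tp (n-1) := htple (n-1) (by omega) j (by omega)
    have hab1 : tp (n-1) ≤ tp n := htple n hnN' (n-1) (by omega)
    have hab2 : tp n ≤ tp (n+1) := htple (n+1) hnN n (by omega)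
    -- lower bound for the n-th average
    have hlb : Bf (tp n - tp (j-1)) - Bf (tp n - tp j) ≤ θ n j := by
      rw [hθdef]; dsimp only
      rw [hq1, le_div_iff₀ hk1]
      have : (Bf (tp n - tp (j-1)) - Bf (tp n - tp j)) * kstep tp n
          = ∫ _t in (tp (n-1))..(tp n), (Bf (tp n - tp (j-1)) - Bf (tp n - tp j)) := by
        rw [intervalIntegral.integral_const, smul_eq_mul]
        unfold kstep; ring
      rw [this, intervalIntegral.integral_of_le hab1, intervalIntegral.integral_of_le hab1]
      refine setIntegral_mono_on
        (by rw [← Set.uIoc_of_le hab1, ← intervalIntegrable_iff]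
            exact intervalIntegrable_const)
        (by rw [← Set.uIoc_of_le hab1, ← intervalIntegrable_iff]
            exact (hBfII (tp (j-1)) _ _).sub (hBfII (tp j) _ _))
        measurableSet_Ioc ?_
      intro t ht
      exact hψcomp (tp (j-1)) (tp j) t (tp n) hc0 hcc
        (lt_of_le_of_lt hjle ht.1) ht.2
    -- upper bound for the (n+1)-st average
    have hub : θ (n+1) j ≤ Bf (tp n - tp (j-1)) - Bf (tp n - tp j) := by
      rw [hθdef]; dsimp only
      rw [hq2, div_le_iff₀ hk2]
      have hconst : (Bf (tp n - tp (j-1)) - Bf (tp n - tp j)) * kstep tp (n+1)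
          = ∫ _t in (tp n)..(tp (n+1)), (Bf (tp n - tp (j-1)) - Bf (tp n - tp j)) := by
        rw [intervalIntegral.integral_const, smul_eq_mul]
        unfold kstep
        rw [hsimp1]; ring
      rw [hconst]
      refine intervalIntegral.integral_mono_on hab2
        ((hBfII (tp (j-1)) _ _).sub (hBfII (tp j) _ _))
        intervalIntegrable_const ?_
      intro t ht
      exact hψcomp (tp (j-1)) (tp j) (tp n) t hc0 hcc hjlt ht.1
    linarith
  -- the data terms
  set F1 : ℕ → H := fun n => kstep tp n • iavg tp f1 n with hF1
  set F2 : ℕ → H := fun n => kstep tp n • iavg tp f2 n with hF2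
  have hkθ : ∀ n j, 1 ≤ j → j ≤ n → n ≤ N →
      kstep tp n * θ n j = qweight β tp n j := by
    intro n j h1 h2 h3
    have hk0 : kstep tp n ≠ 0 := ne_of_gt (hkpos n (le_trans h1 h2) h3)
    rw [hθdef]; dsimp only
    field_simp
  have eq1' : ∀ n, 1 ≤ n → n ≤ N → U1 n - U1 (n-1) = kstep tp n • U2 n + F1 n := by
    intro n h1 h2
    rw [hF1]
    exact heq1 n h1 h2
  have eq2' : ∀ n, 1 ≤ n → n ≤ N →
      ρ • (U2 n - U2 (n-1)) + (kstep tp n - kstep tp n * θ n n) • A (U1 n)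
          - ∑ j ∈ Finset.Ico 1 n, (kstep tp n * θ n j) • A (U1 j) = F2 n := by
    intro n h1 h2
    have hnn : kstep tp n * θ n n = qweight β tp n n := hkθ n n h1 le_rfl h2
    have hsum : ∑ j ∈ Finset.Ico 1 n, (kstep tp n * θ n j) • A (U1 j)
        = ∑ j ∈ Finset.Ico 1 n, qweight β tp n j • A (U1 j) := by
      refine Finset.sum_congr rfl fun j hj => ?_
      obtain ⟨hj1, hj2⟩ := Finset.mem_Ico.mp hj
      rw [hkθ n j hj1 (le_of_lt hj2) h2]
    rw [hnn, hsum, hF2]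
    exact heq2 n h1 h2
  -- apply the discrete stability estimate
  have hmain := discrete_stab ρ γ hρ hγ0 hγ1 A sqrtA hsa hsq N hN
    (fun n => kstep tp n) hkpos θ G hG0' hθ0' hGsum' hGγ' hGmono' hθmono'
    U1 U2 F1 F2 eq1' eq2'
  rw [hU10, hU20] at hmain
  -- bound the discrete data sum by the integral
  have hIIH : ∀ (f : ℝ → H), IntegrableOn f (Set.Icc 0 (tp N)) →
      ∀ n, 1 ≤ n → n ≤ N → IntervalIntegrable f volume (tp (n-1)) (tp n) := by
    intro f hf n h1 h2
    rw [intervalIntegrable_iff]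
    apply hf.mono_set
    rw [Set.uIoc_of_le (htple n h2 (n-1) (by omega))]
    intro t ht
    exact ⟨le_trans (htp0le (n-1) (by omega)) (le_of_lt ht.1),
      le_trans ht.2 (htple N le_rfl n h2)⟩
  have hperF : ∀ n, 1 ≤ n → n ≤ N → ‖sqrtA (F1 n)‖ + ‖F2 n‖
      ≤ ∫ t in (tp (n-1))..(tp n), (‖sqrtA (f1 t)‖ + ‖f2 t‖) := by
    intro n h1 h2
    have hk0 : kstep tp n ≠ 0 := ne_of_gt (hkpos n h1 h2)
    have hab : tp (n-1) ≤ tp n := htple n h2 (n-1) (by omega)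
    have hF1eq : F1 n = ∫ t in (tp (n-1))..(tp n), f1 t := by
      rw [hF1]; dsimp only
      unfold iavg
      rw [smul_smul, mul_inv_cancel₀ hk0, one_smul]
    have hF2eq : F2 n = ∫ t in (tp (n-1))..(tp n), f2 t := by
      rw [hF2]; dsimp only
      unfold iavg
      rw [smul_smul, mul_inv_cancel₀ hk0, one_smul]
    have hIf1 := hIIH f1 hf1 n h1 h2
    have hIf2 := hIIH f2 hf2 n h1 h2
    have hcomm : sqrtA (∫ t in (tp (n-1))..(tp n), f1 t)
        = ∫ t in (tp (n-1))..(tp n), sqrtA (f1 t) :=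
      (ContinuousLinearMap.intervalIntegral_comp_comm sqrtA hIf1).symm
    have hIsf1 : IntervalIntegrable (fun t => sqrtA (f1 t)) volume (tp (n-1)) (tp n) := by
      rw [intervalIntegrable_iff] at hIf1 ⊢
      exact sqrtA.integrable_comp hIf1
    calc ‖sqrtA (F1 n)‖ + ‖F2 n‖
        = ‖∫ t in (tp (n-1))..(tp n), sqrtA (f1 t)‖
          + ‖∫ t in (tp (n-1))..(tp n), f2 t‖ := by rw [hF1eq, hF2eq, hcomm]
      _ ≤ (∫ t in (tp (n-1))..(tp n), ‖sqrtA (f1 t)‖)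
          + ∫ t in (tp (n-1))..(tp n), ‖f2 t‖ :=
          add_le_add (intervalIntegral.norm_integral_le_integral_norm hab)
            (intervalIntegral.norm_integral_le_integral_norm hab)
      _ = ∫ t in (tp (n-1))..(tp n), (‖sqrtA (f1 t)‖ + ‖f2 t‖) :=
          (intervalIntegral.integral_add hIsf1.norm hIf2.norm).symm
  have hgInt : IntegrableOn (fun t => ‖sqrtA (f1 t)‖ + ‖f2 t‖) (Set.Icc 0 (tp N)) :=
    (sqrtA.integrable_comp hf1).norm.add hf2.norm
  have hIIR : ∀ n, 1 ≤ n → n ≤ N →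
      IntervalIntegrable (fun t => ‖sqrtA (f1 t)‖ + ‖f2 t‖) volume (tp (n-1)) (tp n) := by
    intro n h1 h2
    rw [intervalIntegrable_iff]
    apply hgInt.mono_set
    rw [Set.uIoc_of_le (htple n h2 (n-1) (by omega))]
    intro t ht
    exact ⟨le_trans (htp0le (n-1) (by omega)) (le_of_lt ht.1),
      le_trans ht.2 (htple N le_rfl n h2)⟩
  have hsplit : ∑ n ∈ Finset.Icc 1 N, (∫ t in (tp (n-1))..(tp n), (‖sqrtA (f1 t)‖ + ‖f2 t‖))
      = ∫ t in (0:ℝ)..(tp N), (‖sqrtA (f1 t)‖ + ‖f2 t‖) := by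
    have hadj := intervalIntegral.sum_integral_adjacent_intervals
      (f := fun t => ‖sqrtA (f1 t)‖ + ‖f2 t‖) (μ := volume) (a := tp) (n := N) ?_
    · rw [htp0] at hadj
      rw [← hadj]
      have hrw : Finset.Icc 1 N = Finset.Ico 1 (N+1) := rfl
      rw [hrw, Finset.sum_Ico_eq_sum_range]
      have heq : N + 1 - 1 = N := by omega
      rw [heq]
      refine Finset.sum_congr rfl fun i hi => ?_
      have e1 : (1 + i) - 1 = i := by omega
      have e2 : 1 + i = i + 1 := by omega
      rw [e1, e2]
    · intro i hi
      have h := hIIR (i+1) (by omega) (by omega)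
      have e1 : (i + 1 : ℕ) - 1 = i := by omega
      rwa [e1] at h
  have hDle : (∑ n ∈ Finset.Icc 1 N, (‖sqrtA (F1 n)‖ + ‖F2 n‖))
      ≤ ∫ t in (0:ℝ)..(tp N), (‖sqrtA (f1 t)‖ + ‖f2 t‖) := by
    rw [← hsplit]
    refine Finset.sum_le_sum fun n hn => ?_
    obtain ⟨h1, h2⟩ := Finset.mem_Icc.mp hn
    exact hperF n h1 h2
  refine le_trans hmain ?_
  have hC0 : 0 ≤ 8 / min ρ (1-γ) + 2 * Real.sqrt (2 * max ρ 1 / min ρ (1-γ)) := by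
    have h1 : 0 < 8 / min ρ (1-γ) := div_pos (by norm_num) hc1p
    have h2 := Real.sqrt_nonneg (2 * max ρ 1 / min ρ (1-γ))
    linarith
  apply mul_le_mul_of_nonneg_left _ hC0
  linarith
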